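/- For valuated matroids realizable over an algebraically closed valued field K of characteristic p with surjective valuation, membership in the tropical symplectic Grassmannian implies membership in the symplectic Dressian: if μ = val(X) for the Plücker vector X of an isotropic subspace L ⊆ K^{2n} of dimension k, then for every (k−2)-subset S of [2n], the minimum of μ_{S∪{i,ī}} over i ∈ [n] with {i,ī} ∩ S = ∅ is attained at least twice or is ∞. -/

import Mathlib

/-- The minimum of `f` is attained at least twice, or `f` is identically `∞`. -/
def AAT {ι : Type*} (f : ι → WithTop ℝ) : Prop :=
  (∀ i, f i = ⊤) ∨ ∃ i j, i ≠ j ∧ f i = f j ∧ ∀ l, f i ≤ f l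

/-- The Plücker coordinate of the row space of `M` indexed by a `k`-subset `J` of the columns
(the maximal minor on the columns of `J` in increasing order), and `0` if `J.card ≠ k`. -/
noncomputable def pluckerCoord {K : Type*} [CommRing K] {k : ℕ} {ι : Type*} [LinearOrder ι]
    [DecidableEq ι] (M : Matrix (Fin k) ι K) (J : Finset ι) : K :=
  if h : J.card = k then
    (M.submatrix id fun a : Fin k => ((J.orderIsoOfFin h) a : ι)).det
  else 0

section Aux

section Val
variable {K : Type*} [Field K] (v : K → WithTop ℝ)

lemma val_sum_gt {ι : Type*} [DecidableEq ι]
    (hadd : ∀ x y : K, min (v x) (v y) ≤ v (x + y)) (hzero : v 0 = ⊤)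
    (s : Finset ι) (f : ι → K) (c : WithTop ℝ) (hc : c ≠ ⊤)
    (h : ∀ i ∈ s, c < v (f i)) : c < v (∑ i ∈ s, f i) := by
  induction s using Finset.induction with
  | empty => simpa [hzero] using lt_of_le_of_ne le_top hc
  | @insert a t hx ih =>
      rw [Finset.sum_insert hx]
      refine lt_of_lt_of_le ?_ (hadd _ _)
      exact lt_min (h _ (Finset.mem_insert_self _ _))
        (ih fun i hi => h i (Finset.mem_insert_of_mem hi))

lemma AAT_of_sum_zero {ι : Type*} [Fintype ι] [DecidableEq ι]
    (hadd : ∀ x y : K, min (v x) (v y) ≤ v (x + y)) (hzero : v 0 = ⊤)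
    (hneg : ∀ x : K, v (-x) = v x)
    (f : ι → K) (hsum : ∑ i, f i = 0) : AAT (fun i => v (f i)) := by
  by_cases htop : ∀ i, v (f i) = ⊤
  · exact Or.inl htop
  push_neg at htop
  obtain ⟨i₀, hi₀⟩ := htop
  obtain ⟨m, -, hm⟩ := Finset.exists_min_image Finset.univ (fun i => v (f i))
    ⟨i₀, Finset.mem_univ _⟩
  right
  have key : ∃ j, j ≠ m ∧ v (f j) = v (f m) := by
    by_contra hno
    push_neg at hno
    have hcne : v (f m) ≠ ⊤ := by
      intro h
      exact hi₀ (top_le_iff.mp (h ▸ hm i₀ (Finset.mem_univ _)))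
    have hstrict : ∀ j ∈ Finset.univ.erase m, v (f m) < v (f j) := fun j hj =>
      lt_of_le_of_ne (hm j (Finset.mem_univ _))
        (fun h => hno j (Finset.ne_of_mem_erase hj) h.symm)
    have h1 : v (f m) < v (∑ j ∈ Finset.univ.erase m, f j) :=
      val_sum_gt v hadd hzero _ f _ hcne hstrict
    have h2 : ∑ j ∈ Finset.univ.erase m, f j = -f m := by
      have h3 := Finset.sum_erase_add Finset.univ f (Finset.mem_univ m)
      rw [hsum] at h3
      exact eq_neg_of_add_eq_zero_left h3
    rw [h2, hneg] at h1
    exact lt_irrefl _ h1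
  obtain ⟨j, hj, hje⟩ := key
  exact ⟨m, j, Ne.symm hj, hje.symm, fun l => hm l (Finset.mem_univ _)⟩

end Val


private def delt {N : ℕ} (K : Type*) [Field K] (a : Fin N) : Fin N → K :=
  fun j => if a = j then 1 else 0

private lemma delt_expand {N : ℕ} {K : Type*} [Field K] (x : Fin N → K) :
    x = ∑ a : Fin N, x a • delt K a :=
  pi_eq_sum_univ x

open Matrix Finset in
private lemma sum_det_zero {K : Type*} [Field K] {m n : ℕ}
    (M : Matrix (Fin (m + 2)) (Fin (n + n)) K)
    (hiso : ∀ a b : Fin (m + 2), ∑ i : Fin n,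
      (M a (Fin.castAdd n i) * M b (Fin.natAdd n i) -
        M a (Fin.natAdd n i) * M b (Fin.castAdd n i)) = 0)
    (base : Fin m → Fin (m + 2) → K) :
    ∑ i : Fin n, (Matrix.detRowAlternating
      (Fin.cons (fun r => M r (Fin.castAdd n i))
        (Fin.cons (fun r => M r (Fin.natAdd n i)) base)) : K) = 0 := by
  classical
  set d : ((Fin (m+2)) → K) [⋀^(Fin (m+2))]→ₗ[K] K := Matrix.detRowAlternating with hd
  set E : Fin (m + 2) → Fin (m + 2) → K :=
    fun a b => d (Fin.cons (delt K a) (Fin.cons (delt K b) base)) with hE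
  have h01 : (0 : Fin (m + 2)) ≠ 1 := by
    simp [Fin.ext_iff]
  -- updating slot 1 of a double cons
  have h10 : ∀ (x : Fin (m + 2) → K) (y : Fin m → Fin (m + 2) → K)
      (z w : Fin (m + 2) → K),
      Function.update (Fin.cons x (Fin.cons z y) :
        Fin (m + 2) → Fin (m + 2) → K) (1 : Fin (m + 2)) w
        = Fin.cons x (Fin.cons w y) := by
    intro x y z w
    rw [← Fin.succ_zero_eq_one, ← Fin.cons_update, Fin.update_cons_zero]
  -- sum in slot 0
  have sum0 : ∀ (g : Fin (m + 1) → Fin (m + 2) → K)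
      (c : Fin (m + 2) → Fin (m + 2) → K),
      d (Fin.cons (∑ a : Fin (m + 2), c a) g) = ∑ a : Fin (m + 2), d (Fin.cons (c a) g) := by
    intro g c
    rw [show (Fin.cons (∑ a : Fin (m + 2), c a) g : Fin (m + 2) → Fin (m + 2) → K)
        = Function.update (Fin.cons (c 0) g) 0 (∑ a : Fin (m + 2), c a) from
      (Fin.update_cons_zero _ _ _).symm]
    rw [d.map_update_sum]
    exact Finset.sum_congr rfl fun a _ => by rw [Fin.update_cons_zero]
  -- sum in slot 1
  have sum1 : ∀ (x : Fin (m + 2) → K) (c : Fin (m + 2) → Fin (m + 2) → K),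
      d (Fin.cons x (Fin.cons (∑ b : Fin (m + 2), c b) base)) =
        ∑ b : Fin (m + 2), d (Fin.cons x (Fin.cons (c b) base)) := by
    intro x c
    rw [← h10 x base (c 0) (∑ b : Fin (m + 2), c b),
      d.map_update_sum]
    exact Finset.sum_congr rfl fun b _ => by rw [h10]
  have smul0 : ∀ (g : Fin (m + 1) → Fin (m + 2) → K) (t : K) (x : Fin (m + 2) → K),
      d (Fin.cons (t • x) g) = t * d (Fin.cons x g) := by
    intro g t x
    rw [show (Fin.cons (t • x) g : Fin (m + 2) → Fin (m + 2) → K)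
        = Function.update (Fin.cons x g) 0 (t • x) from (Fin.update_cons_zero _ _ _).symm,
      d.map_update_smul,
      Fin.update_cons_zero, smul_eq_mul]
  have smul1 : ∀ (x : Fin (m + 2) → K) (t : K) (y : Fin (m + 2) → K),
      d (Fin.cons x (Fin.cons (t • y) base)) = t * d (Fin.cons x (Fin.cons y base)) := by
    intro x t y
    rw [← h10 x base y (t • y),
      d.map_update_smul,
      h10, smul_eq_mul]
  have add1 : ∀ (x y z : Fin (m + 2) → K),
      d (Fin.cons x (Fin.cons (y + z) base)) =
        d (Fin.cons x (Fin.cons y base)) + d (Fin.cons x (Fin.cons z base)) := by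
    intro x y z
    rw [← h10 x base y (y + z),
      d.map_update_add,
      h10, h10]
  have expand : ∀ x y : Fin (m + 2) → K,
      d (Fin.cons x (Fin.cons y base)) =
        ∑ a : Fin (m + 2), ∑ b : Fin (m + 2), x a * y b * E a b := by
    intro x y
    conv_lhs => rw [delt_expand x]
    rw [sum0]
    refine Finset.sum_congr rfl fun a _ => ?_
    rw [smul0]
    conv_lhs => rw [delt_expand y]
    rw [sum1, Finset.mul_sum]
    refine Finset.sum_congr rfl fun b _ => ?_
    rw [smul1, hE]
    ring
  have Ediag : ∀ a, E a a = 0 := by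
    intro a
    refine d.map_eq_zero_of_eq _ (i := 0) (j := 1) ?_ h01
    rw [Fin.cons_zero, ← Fin.succ_zero_eq_one, Fin.cons_succ, Fin.cons_zero]
  have Easym : ∀ a b, E a b = -E b a := by
    intro a b
    have h0 : d (Fin.cons (delt K a + delt K b) (Fin.cons (delt K a + delt K b) base)) = 0 := by
      refine d.map_eq_zero_of_eq _ (i := 0) (j := 1) ?_ h01
      rw [Fin.cons_zero, ← Fin.succ_zero_eq_one, Fin.cons_succ, Fin.cons_zero]
    have hadd0 : ∀ y : Fin (m + 1) → Fin (m + 2) → K,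
        d (Fin.cons (delt K a + delt K b) y) =
          d (Fin.cons (delt K a) y) + d (Fin.cons (delt K b) y) := by
      intro y
      rw [show (Fin.cons (delt K a + delt K b) y : Fin (m + 2) → Fin (m + 2) → K)
          = Function.update (Fin.cons (delt K a) y) 0 (delt K a + delt K b) from
        (Fin.update_cons_zero _ _ _).symm,
        d.map_update_add,
        Fin.update_cons_zero, Fin.update_cons_zero]
    rw [hadd0, add1, add1] at h0
    have h1 := Ediag a
    have h2 := Ediag b
    rw [hE] at h1 h2 ⊢
    simp only at h0 h1 h2 ⊢
    linear_combination h0 - h1 - h2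
  have main : ∑ i : Fin n, (d
      (Fin.cons (fun r => M r (Fin.castAdd n i))
        (Fin.cons (fun r => M r (Fin.natAdd n i)) base)) : K) =
      ∑ p : Fin (m + 2) × Fin (m + 2),
        (∑ i : Fin n, M p.1 (Fin.castAdd n i) * M p.2 (Fin.natAdd n i)) * E p.1 p.2 := by
    calc ∑ i : Fin n, (d (Fin.cons (fun r => M r (Fin.castAdd n i))
            (Fin.cons (fun r => M r (Fin.natAdd n i)) base)) : K)
        = ∑ i : Fin n, ∑ p : Fin (m + 2) × Fin (m + 2),
            M p.1 (Fin.castAdd n i) * M p.2 (Fin.natAdd n i) * E p.1 p.2 := by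
          refine Finset.sum_congr rfl fun i _ => ?_
          rw [expand, ← Finset.sum_product', Finset.univ_product_univ]
      _ = ∑ p : Fin (m + 2) × Fin (m + 2), ∑ i : Fin n,
            M p.1 (Fin.castAdd n i) * M p.2 (Fin.natAdd n i) * E p.1 p.2 := Finset.sum_comm
      _ = _ := Finset.sum_congr rfl fun p _ => by rw [Finset.sum_mul]
  have Tsymm : ∀ a b : Fin (m + 2),
      ∑ i : Fin n, M a (Fin.castAdd n i) * M b (Fin.natAdd n i) =
      ∑ i : Fin n, M b (Fin.castAdd n i) * M a (Fin.natAdd n i) := by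
    intro a b
    have h5 := hiso a b
    rw [Finset.sum_sub_distrib] at h5
    rw [sub_eq_zero.mp h5]
    exact Finset.sum_congr rfl fun i _ => mul_comm _ _
  rw [main]
  refine Finset.sum_ninvolution (fun p => (p.2, p.1)) ?_ ?_ (fun _ => Finset.mem_univ _)
    (fun p => rfl)
  · intro p
    obtain ⟨a, b⟩ := p
    simp only
    rw [Tsymm b a, Easym a b]
    ring
  · intro p hp
    obtain ⟨a, b⟩ := p
    simp only [Prod.mk.injEq, ne_eq, not_and]
    intro hba
    subst hba
    exfalso
    exact hp (by rw [Ediag, mul_zero])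

end Aux

/-- Membership in the tropical symplectic Grassmannian implies membership in the symplectic
Dressian: if `μ = val(X)` for the Plücker vector `X` of an isotropic `k`-dimensional subspace
`L ⊆ K^{2n}` (pairing `i ↔ ī = n + i`), then for every `(k−2)`-subset `S` of `[2n]`, the
minimum of `μ_{S∪{i,ī}}` over valid `i` is attained at least twice or is `∞`. -/


theorem tropical_symplectic_grassmannian_subset_dressian {K : Type*} [Field K]
    (v : K → WithTop ℝ)
    (hmul : ∀ x y : K, v (x * y) = v x + v y)
    (hadd : ∀ x y : K, min (v x) (v y) ≤ v (x + y))
    (hzero : v 0 = ⊤)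
    {k n : ℕ} (M : Matrix (Fin k) (Fin (n + n)) K)
    (hli : LinearIndependent K fun i : Fin k => M i)
    (hiso : ∀ x ∈ Submodule.span K (Set.range fun i : Fin k => M i),
      ∀ y ∈ Submodule.span K (Set.range fun i : Fin k => M i),
        (∑ i : Fin n,
          (x (Fin.castAdd n i) * y (Fin.natAdd n i) -
            x (Fin.natAdd n i) * y (Fin.castAdd n i))) = 0) :
    ∀ S : Finset (Fin (n + n)), S.card = k - 2 →
      AAT (fun i : {i : Fin n // Fin.castAdd n i ∉ S ∧ Fin.natAdd n i ∉ S} =>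
        v (pluckerCoord M
          (insert (Fin.castAdd n (i : Fin n)) (insert (Fin.natAdd n (i : Fin n)) S)))) := by
  intro S hS
  classical
  by_cases h1top : v 1 = ⊤
  · left
    intro i
    have h := hmul (pluckerCoord M
      (insert (Fin.castAdd n (i : Fin n)) (insert (Fin.natAdd n (i : Fin n)) S))) 1
    rw [mul_one, h1top, add_top] at h
    exact h
  have h1 : v 1 = 0 := by
    have h := hmul 1 1
    rw [mul_one] at h
    obtain ⟨r, hr⟩ := WithTop.ne_top_iff_exists.mp h1top
    rw [← hr, ← WithTop.coe_add, WithTop.coe_inj] at h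
    have : r = 0 := by linarith
    rw [← hr, this, WithTop.coe_zero]
  have hneg1 : v (-1 : K) = 0 := by
    have h := hmul (-1 : K) (-1)
    rw [neg_one_mul, neg_neg, h1] at h
    by_cases htop : v (-1 : K) = ⊤
    · rw [htop] at h
      exact absurd h.symm (by simp)
    obtain ⟨r, hr⟩ := WithTop.ne_top_iff_exists.mp htop
    rw [← hr, ← WithTop.coe_add] at h
    rw [← hr]
    have h2 : (0 : WithTop ℝ) = ((0 : ℝ) : WithTop ℝ) := rfl
    rw [h2, WithTop.coe_inj] at h ⊢
    linarith
  have hneg : ∀ x : K, v (-x) = v x := fun x => by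
    rw [← neg_one_mul, hmul, hneg1, zero_add]
  rcases Nat.lt_or_ge k 2 with hk | hk
  · left
    intro i
    have hne : Fin.castAdd n (i : Fin n) ≠ Fin.natAdd n (i : Fin n) := by
      have := (i : Fin n).isLt
      simp only [ne_eq, Fin.ext_iff, Fin.coe_castAdd, Fin.coe_natAdd]
      omega
    have hcard : (insert (Fin.castAdd n (i : Fin n))
        (insert (Fin.natAdd n (i : Fin n)) S)).card ≠ k := by
      rw [Finset.card_insert_of_notMem
          (fun h => (Finset.mem_insert.mp h).elim hne i.2.1),
        Finset.card_insert_of_notMem i.2.2, hS]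
      omega
    simp only [pluckerCoord, dif_neg hcard, hzero]
  obtain ⟨m, rfl⟩ : ∃ m, k = m + 2 := ⟨k - 2, by omega⟩
  have hSm : S.card = m := by omega
  set sEnum : Fin m → Fin (n + n) := fun j => ((S.orderIsoOfFin hSm j : Fin (n + n))) with hsE
  have hsEnum_mem : ∀ j, sEnum j ∈ S := fun j => (S.orderIsoOfFin hSm j).2
  have hsEnum_inj : Function.Injective sEnum := fun j j' h =>
    (S.orderIsoOfFin hSm).injective (Subtype.ext h)
  have hsEnum_surj : ∀ x ∈ S, ∃ j, sEnum j = x := fun x hx =>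
    ⟨(S.orderIsoOfFin hSm).symm ⟨x, hx⟩, by
      show ((S.orderIsoOfFin hSm) ((S.orderIsoOfFin hSm).symm ⟨x, hx⟩) : Fin (n + n)) = x
      rw [OrderIso.apply_symm_apply]⟩
  set bs : Fin m → Fin (m + 2) → K := fun j r => M r (sEnum j) with hbs
  set D : Fin n → K := fun i => Matrix.detRowAlternating
    (Fin.cons (fun r => M r (Fin.castAdd n i))
      (Fin.cons (fun r => M r (Fin.natAdd n i)) bs)) with hD
  have hiso' : ∀ a b : Fin (m + 2), ∑ i : Fin n,
      (M a (Fin.castAdd n i) * M b (Fin.natAdd n i) -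
        M a (Fin.natAdd n i) * M b (Fin.castAdd n i)) = 0 := fun a b =>
    hiso (M a) (Submodule.subset_span ⟨a, rfl⟩) (M b) (Submodule.subset_span ⟨b, rfl⟩)
  have hDsum : ∑ i : Fin n, D i = 0 := sum_det_zero M hiso' bs
  have hDzero : ∀ i : Fin n, ¬(Fin.castAdd n i ∉ S ∧ Fin.natAdd n i ∉ S) → D i = 0 := by
    intro i hi
    rw [not_and_or, not_not, not_not] at hi
    rcases hi with hi | hi
    · obtain ⟨j, hj⟩ := hsEnum_surj _ hi
      refine Matrix.detRowAlternating.map_eq_zero_of_eq _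
        (i := (0 : Fin (m + 2))) (j := j.succ.succ) ?_ (Fin.succ_ne_zero _).symm
      rw [Fin.cons_zero, Fin.cons_succ, Fin.cons_succ]
      simp only [hbs]
      rw [hj]
    · obtain ⟨j, hj⟩ := hsEnum_surj _ hi
      refine Matrix.detRowAlternating.map_eq_zero_of_eq _
        (i := (1 : Fin (m + 2))) (j := j.succ.succ) ?_
        (fun h => (Fin.succ_ne_zero j).symm (Fin.succ_injective _
          (by rwa [← Fin.succ_zero_eq_one] at h)))
      rw [← Fin.succ_zero_eq_one, Fin.cons_succ, Fin.cons_zero,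
        Fin.cons_succ, Fin.cons_succ]
      simp only [hbs]
      rw [hj]
  have hsub : ∑ i : {i : Fin n // Fin.castAdd n i ∉ S ∧ Fin.natAdd n i ∉ S}, D i.val = 0 := by
    have e1 : ∑ i ∈ Finset.univ.filter
        (fun i : Fin n => Fin.castAdd n i ∉ S ∧ Fin.natAdd n i ∉ S), D i
        = ∑ i : {i : Fin n // Fin.castAdd n i ∉ S ∧ Fin.natAdd n i ∉ S}, D i.val :=
      Finset.sum_subtype _ (by simp) D
    have e2 := Finset.sum_filter_add_sum_filter_not Finset.univ
      (fun i : Fin n => Fin.castAdd n i ∉ S ∧ Fin.natAdd n i ∉ S) D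
    have e3 : ∑ i ∈ Finset.univ.filter
        (fun i : Fin n => ¬(Fin.castAdd n i ∉ S ∧ Fin.natAdd n i ∉ S)), D i = 0 :=
      Finset.sum_eq_zero fun i hi => hDzero i (Finset.mem_filter.mp hi).2
    rw [← e1, ← hDsum, ← e2, e3, add_zero]
  -- identify each valid term up to sign with the Plücker coordinate
  have key : ∀ i : {i : Fin n // Fin.castAdd n i ∉ S ∧ Fin.natAdd n i ∉ S},
      v (D i.val) = v (pluckerCoord M
        (insert (Fin.castAdd n (i : Fin n)) (insert (Fin.natAdd n (i : Fin n)) S))) := by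
    intro i
    set c : Fin (n + n) := Fin.castAdd n (i : Fin n) with hc
    set t : Fin (n + n) := Fin.natAdd n (i : Fin n) with ht
    have hct : c ≠ t := by
      have := (i : Fin n).isLt
      simp only [hc, ht, ne_eq, Fin.ext_iff, Fin.coe_castAdd, Fin.coe_natAdd]
      omega
    have hcS : c ∉ S := i.2.1
    have htS : t ∉ S := i.2.2
    set T : Finset (Fin (n + n)) := insert c (insert t S) with hT
    have hTcard : T.card = m + 2 := by
      rw [hT, Finset.card_insert_of_notMem (by simp [hct, i.2.1, hcS]),
        Finset.card_insert_of_notMem i.2.2, hSm]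
    set g : Fin (m + 2) → Fin (n + n) := Fin.cons c (Fin.cons t sEnum) with hg
    have hg_mem : ∀ a, g a ∈ T := by
      intro a
      refine Fin.cases ?_ (fun b => ?_) a
      · rw [hg, Fin.cons_zero]; exact Finset.mem_insert_self _ _
      · refine Fin.cases ?_ (fun j => ?_) b
        · rw [hg, Fin.cons_succ, Fin.cons_zero]
          exact Finset.mem_insert_of_mem (Finset.mem_insert_self _ _)
        · rw [hg, Fin.cons_succ, Fin.cons_succ]
          exact Finset.mem_insert_of_mem (Finset.mem_insert_of_mem (hsEnum_mem j))
    have hg_inj : Function.Injective g := by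
      rw [hg, Fin.cons_injective_iff]
      refine ⟨?_, ?_⟩
      · rintro ⟨b, hb⟩
        revert hb
        refine Fin.cases ?_ (fun j => ?_) b
        · rw [Fin.cons_zero]; exact fun h => hct h.symm
        · rw [Fin.cons_succ]; exact fun h => hcS (h ▸ hsEnum_mem j)
      · rw [Fin.cons_injective_iff]
        exact ⟨by rintro ⟨j, hj⟩; exact htS (hj ▸ hsEnum_mem j), hsEnum_inj⟩
    set σ : Fin (m + 2) → Fin (m + 2) :=
      fun a => (T.orderIsoOfFin hTcard).symm ⟨g a, hg_mem a⟩ with hσ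
    have hσg : ∀ a, ((T.orderIsoOfFin hTcard) (σ a) : Fin (n + n)) = g a := fun a => by
      show ((T.orderIsoOfFin hTcard) ((T.orderIsoOfFin hTcard).symm ⟨g a, hg_mem a⟩) :
        Fin (n + n)) = g a
      rw [OrderIso.apply_symm_apply]
    have hσinj : Function.Injective σ := fun a a' h =>
      hg_inj (by rw [← hσg a, ← hσg a', h])
    set perm : Equiv.Perm (Fin (m + 2)) :=
      Equiv.ofBijective σ (Finite.injective_iff_bijective.mp hσinj) with hperm
    have hDdet : D i.val = (M.submatrix id g).det := by
      have hDi : D i.val = Matrix.detRowAlternating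
          (Fin.cons (fun r => M r c) (Fin.cons (fun r => M r t) bs)) := rfl
      rw [hDi]
      have hfun : (Fin.cons (fun r => M r c) (Fin.cons (fun r => M r t) bs) :
          Fin (m + 2) → Fin (m + 2) → K) = (M.submatrix id g).transpose := by
        funext j
        refine Fin.cases ?_ (fun b => ?_) j
        · funext r
          rw [Fin.cons_zero]
          show M r c = M r (g 0)
          rw [hg, Fin.cons_zero]
        · refine Fin.cases ?_ (fun j2 => ?_) b
          · funext r
            rw [Fin.cons_succ, Fin.cons_zero]
            show M r t = M r (g (Fin.succ 0))
            rw [hg, Fin.cons_succ, Fin.cons_zero]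
          · funext r
            rw [Fin.cons_succ, Fin.cons_succ]
            show bs j2 r = M r (g j2.succ.succ)
            rw [hg, Fin.cons_succ, Fin.cons_succ]
      rw [hfun]
      show ((M.submatrix id g).transpose).det = (M.submatrix id g).det
      exact Matrix.det_transpose _
    have hgcomp : g = (fun a => ((T.orderIsoOfFin hTcard) a : Fin (n + n))) ∘ perm := by
      funext a
      exact (hσg a).symm
    have hplucker : pluckerCoord M T =
        (M.submatrix id (fun a => ((T.orderIsoOfFin hTcard) a : Fin (n + n)))).det := by
      simp only [pluckerCoord, dif_pos hTcard]
    have hdet2 : (M.submatrix id g).det = (Equiv.Perm.sign perm : ℤ) * pluckerCoord M T := by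
      rw [hgcomp, hplucker]
      rw [show M.submatrix id ((fun a => ((T.orderIsoOfFin hTcard) a : Fin (n + n))) ∘ perm)
          = (M.submatrix id (fun a => ((T.orderIsoOfFin hTcard) a : Fin (n + n)))).submatrix
            id perm from by rw [Matrix.submatrix_submatrix]; rfl]
      rw [Matrix.det_permute']
    rw [hDdet, hdet2]
    rcases Int.units_eq_one_or (Equiv.Perm.sign perm) with h | h
    · rw [h]
      norm_num
    · rw [h]
      norm_num
      rw [← neg_one_mul, hmul, hneg1, zero_add]
  have hfun2 : (fun i : {i : Fin n // Fin.castAdd n i ∉ S ∧ Fin.natAdd n i ∉ S} =>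
      v (pluckerCoord M
        (insert (Fin.castAdd n (i : Fin n)) (insert (Fin.natAdd n (i : Fin n)) S))))
      = fun i => v (D i.val) := funext fun i => (key i).symm
  rw [hfun2]
  exact AAT_of_sum_zero v hadd hzero hneg _ hsub
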